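/- Assume π ≠ τ. The evolution algebra E^n_{π,τ} is baric if and only if there exists k₀ : Fin n such that one of the following holds: (1) π k₀ = k₀, τ k₀ ≠ k₀, a k₀ k₀ ≠ 0 and a (τ⁻¹ k₀) k₀ = 0; (1') τ k₀ = k₀, π k₀ ≠ k₀, a k₀ k₀ ≠ 0 and a (π⁻¹ k₀) k₀ = 0; (2) π k₀ = k₀, τ k₀ = k₀ and a k₀ k₀ ≠ 0. Moreover, in cases (1) and (1') the functional σ(x) = a k₀ k₀ * x k₀ is a weight function, and in case (2) the functional σ(x) = 2 * a k₀ k₀ * x k₀ is a weight function. -/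

import Mathlib

/-- The product of the evolution algebra `E_{π,τ}(a)` on a finite type `ι`. -/
noncomputable def evolMul {ι : Type*} [Fintype ι] [DecidableEq ι]
    (π τ : Equiv.Perm ι) (a : ι → ι → ℝ) (x y : ι → ℝ) : ι → ℝ :=
  fun j => ∑ i, x i * y i *
    ((if π i = j then a i (π i) else 0) + (if τ i = j then a i (τ i) else 0))

/-- A weight function (character) on `E^n_{π,τ}`: a nonzero linear functional that is
multiplicative with respect to the evolution algebra product. -/
def IsWeight {ι : Type*} [Fintype ι] [DecidableEq ι]
    (π τ : Equiv.Perm ι) (a : ι → ι → ℝ) (σ : (ι → ℝ) →ₗ[ℝ] ℝ) : Prop :=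
  σ ≠ 0 ∧ ∀ x y : ι → ℝ, σ (evolMul π τ a x y) = σ x * σ y

section Aux

variable {ι : Type*} [Fintype ι] [DecidableEq ι] (π τ : Equiv.Perm ι) (a : ι → ι → ℝ)

lemma evolMul_comm' : evolMul π τ a = evolMul τ π a := by
  funext x y j
  unfold evolMul
  exact Finset.sum_congr rfl fun i _ => by ring

lemma evolMul_single_ne {i j : ι} (h : i ≠ j) :
    evolMul π τ a (Pi.single i 1) (Pi.single j 1) = 0 := by
  funext k
  simp only [evolMul, Pi.zero_apply]
  apply Finset.sum_eq_zero
  intro m _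
  rcases eq_or_ne m i with rfl | hm
  · rw [Pi.single_eq_of_ne h]; ring
  · rw [Pi.single_eq_of_ne hm]; ring

lemma evolMul_single_self (i : ι) :
    evolMul π τ a (Pi.single i 1) (Pi.single i 1) =
      fun k => (if π i = k then a i (π i) else 0) + (if τ i = k then a i (τ i) else 0) := by
  funext k
  simp only [evolMul]
  rw [Finset.sum_eq_single i]
  · simp
  · intro m _ hm
    rw [Pi.single_eq_of_ne hm]; ring
  · simp

lemma sigma_expand (σ : (ι → ℝ) →ₗ[ℝ] ℝ) (x : ι → ℝ) :
    σ x = ∑ i, x i * σ (Pi.single i 1) := by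
  have hx : x = ∑ i, x i • (Pi.single i 1 : ι → ℝ) := by
    funext k
    simp [Pi.single_apply, Finset.sum_ite_eq]
  conv_lhs => rw [hx]
  simp [smul_eq_mul]

/-- Verification that the functional is a weight in case (1). -/
lemma weight_case1 (k₀ : ι) (hπ : π k₀ = k₀) (hτ : τ k₀ ≠ k₀) (ha0 : a k₀ k₀ ≠ 0)
    (ha : a (τ⁻¹ k₀) k₀ = 0)
    (σ : (ι → ℝ) →ₗ[ℝ] ℝ) (hσ : ∀ x, σ x = a k₀ k₀ * x k₀) :
    IsWeight π τ a σ := by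
  constructor
  · intro h
    apply ha0
    have := hσ (Pi.single k₀ 1)
    rw [h] at this
    simpa using this.symm
  · intro x y
    rw [hσ, hσ, hσ]
    show a k₀ k₀ * (∑ i, x i * y i * _) = _
    rw [Finset.sum_eq_single k₀]
    · rw [hπ, if_pos rfl, if_neg hτ]
      ring
    · intro i _ hi
      have h1 : π i ≠ k₀ := fun h => hi (by rw [← hπ] at h; exact π.injective h)
      rw [if_neg h1]
      rcases eq_or_ne (τ i) k₀ with h2 | h2
      · have : i = τ⁻¹ k₀ := by rw [← h2]; exact (τ.symm_apply_apply i).symm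
        rw [if_pos h2, h2, this, ha]
        ring
      · rw [if_neg h2]; ring
    · intro h; exact absurd (Finset.mem_univ k₀) h

/-- Verification that the functional is a weight in case (2). -/
lemma weight_case2 (k₀ : ι) (hπ : π k₀ = k₀) (hτ : τ k₀ = k₀) (ha0 : a k₀ k₀ ≠ 0)
    (σ : (ι → ℝ) →ₗ[ℝ] ℝ) (hσ : ∀ x, σ x = 2 * a k₀ k₀ * x k₀) :
    IsWeight π τ a σ := by
  constructor
  · intro h
    apply ha0
    have := hσ (Pi.single k₀ 1)
    rw [h] at this
    have : (0:ℝ) = 2 * a k₀ k₀ := by simpa using this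
    linarith
  · intro x y
    rw [hσ, hσ, hσ]
    show 2 * a k₀ k₀ * (∑ i, x i * y i * _) = _
    rw [Finset.sum_eq_single k₀]
    · rw [hπ, hτ, if_pos rfl]
      ring
    · intro i _ hi
      have h1 : π i ≠ k₀ := fun h => hi (by rw [← hπ] at h; exact π.injective h)
      have h2 : τ i ≠ k₀ := fun h => hi (by rw [← hτ] at h; exact τ.injective h)
      rw [if_neg h1, if_neg h2]; ring
    · intro h; exact absurd (Finset.mem_univ k₀) h

end Aux

/-- the evolution algebra `E^n_{π,τ}` (with `π ≠ τ`) is baric if and only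
if there is `k₀` satisfying condition (1), (1') or (2); moreover in cases (1), (1') the
functional `σ x = a k₀ k₀ * x k₀` is a weight function, and in case (2) the functional
`σ x = 2 * a k₀ k₀ * x k₀` is a weight function. -/
theorem stmt_0 (n : ℕ) (π τ : Equiv.Perm (Fin n)) (hπτ : π ≠ τ)
    (a : Fin n → Fin n → ℝ) :
    ((∃ σ : (Fin n → ℝ) →ₗ[ℝ] ℝ, IsWeight π τ a σ) ↔
      ∃ k₀ : Fin n,
        (π k₀ = k₀ ∧ τ k₀ ≠ k₀ ∧ a k₀ k₀ ≠ 0 ∧ a (τ⁻¹ k₀) k₀ = 0) ∨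
        (τ k₀ = k₀ ∧ π k₀ ≠ k₀ ∧ a k₀ k₀ ≠ 0 ∧ a (π⁻¹ k₀) k₀ = 0) ∨
        (π k₀ = k₀ ∧ τ k₀ = k₀ ∧ a k₀ k₀ ≠ 0)) ∧
    (∀ k₀ : Fin n,
      ((π k₀ = k₀ ∧ τ k₀ ≠ k₀ ∧ a k₀ k₀ ≠ 0 ∧ a (τ⁻¹ k₀) k₀ = 0) ∨
       (τ k₀ = k₀ ∧ π k₀ ≠ k₀ ∧ a k₀ k₀ ≠ 0 ∧ a (π⁻¹ k₀) k₀ = 0) →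
        ∀ σ : (Fin n → ℝ) →ₗ[ℝ] ℝ, (∀ x, σ x = a k₀ k₀ * x k₀) → IsWeight π τ a σ) ∧
      ((π k₀ = k₀ ∧ τ k₀ = k₀ ∧ a k₀ k₀ ≠ 0) →
        ∀ σ : (Fin n → ℝ) →ₗ[ℝ] ℝ, (∀ x, σ x = 2 * a k₀ k₀ * x k₀) →
          IsWeight π τ a σ)) := by
  have weight1' : ∀ k₀, τ k₀ = k₀ → π k₀ ≠ k₀ → a k₀ k₀ ≠ 0 → a (π⁻¹ k₀) k₀ = 0 →
      ∀ σ : (Fin n → ℝ) →ₗ[ℝ] ℝ, (∀ x, σ x = a k₀ k₀ * x k₀) → IsWeight π τ a σ := by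
    intro k₀ hτ hπ ha0 ha σ hσ
    have h := weight_case1 τ π a k₀ hτ hπ ha0 ha σ hσ
    exact ⟨h.1, fun x y => by rw [evolMul_comm']; exact h.2 x y⟩
  constructor
  · constructor
    · -- forward direction
      rintro ⟨σ, hσ0, hmul⟩
      set c : Fin n → ℝ := fun i => σ (Pi.single i 1) with hc
      -- off-diagonal
      have hoff : ∀ i j : Fin n, i ≠ j → c i * c j = 0 := by
        intro i j hij
        rw [← hmul, evolMul_single_ne π τ a hij, map_zero]
      -- diagonal
      have hdiag : ∀ i : Fin n,
          a i (π i) * c (π i) + a i (τ i) * c (τ i) = c i * c i := by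
        intro i
        rw [← hmul, evolMul_single_self π τ a i, sigma_expand]
        simp only [← hc, add_mul, ite_mul, zero_mul, Finset.sum_add_distrib,
          Finset.sum_ite_eq, Finset.mem_univ, if_true]
        rfl
      -- existence of a nonzero coefficient
      have hex : ∃ k₀ : Fin n, c k₀ ≠ 0 := by
        by_contra h
        push_neg at h
        apply hσ0
        apply LinearMap.ext
        intro x
        rw [sigma_expand]
        have h' : ∀ i, σ (Pi.single i 1) = 0 := h
        simp [h']
      obtain ⟨k₀, hk₀⟩ := hex
      have hzero : ∀ i : Fin n, i ≠ k₀ → c i = 0 := by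
        intro i hi
        rcases mul_eq_zero.1 (hoff k₀ i (Ne.symm hi)) with h | h
        · exact absurd h hk₀
        · exact h
      refine ⟨k₀, ?_⟩
      by_cases hπ : π k₀ = k₀ <;> by_cases hτ : τ k₀ = k₀
      · -- case (2)
        refine Or.inr (Or.inr ⟨hπ, hτ, ?_⟩)
        intro h0
        have := hdiag k₀
        rw [hπ, hτ, h0] at this
        simp only [zero_mul, add_zero] at this
        exact hk₀ (by nlinarith)
      · -- case (1)
        have hcτ : c (τ k₀) = 0 := hzero _ hτ
        have := hdiag k₀
        rw [hπ, hcτ, mul_zero, add_zero] at this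
        have hac : a k₀ k₀ = c k₀ := mul_right_cancel₀ hk₀ this
        refine Or.inl ⟨hπ, hτ, by rw [hac]; exact hk₀, ?_⟩
        set i := τ⁻¹ k₀ with hi
        have hτi : τ i = k₀ := τ.apply_symm_apply k₀
        have hik : i ≠ k₀ := fun h => hτ (h ▸ hτi)
        have hci : c i = 0 := hzero i hik
        have hπi : π i ≠ k₀ := fun h => hik (π.injective (by rw [h, hπ]))
        have hcπi : c (π i) = 0 := hzero _ hπi
        have hd := hdiag i
        rw [hci, hτi, hcπi, mul_zero, zero_add, mul_zero] at hd
        exact (mul_eq_zero.1 hd).resolve_right hk₀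
      · -- case (1')
        have hcπ : c (π k₀) = 0 := hzero _ hπ
        have := hdiag k₀
        rw [hτ, hcπ, mul_zero, zero_add] at this
        have hac : a k₀ k₀ = c k₀ := mul_right_cancel₀ hk₀ this
        refine Or.inr (Or.inl ⟨hτ, hπ, by rw [hac]; exact hk₀, ?_⟩)
        set i := π⁻¹ k₀ with hi
        have hπi : π i = k₀ := π.apply_symm_apply k₀
        have hik : i ≠ k₀ := fun h => hπ (h ▸ hπi)
        have hci : c i = 0 := hzero i hik
        have hτi : τ i ≠ k₀ := fun h => hik (τ.injective (by rw [h, hτ]))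
        have hcτi : c (τ i) = 0 := hzero _ hτi
        have hd := hdiag i
        rw [hci, hπi, hcτi, mul_zero, add_zero, mul_zero] at hd
        exact (mul_eq_zero.1 hd).resolve_right hk₀
      · -- impossible case
        exfalso
        have hcπ : c (π k₀) = 0 := hzero _ hπ
        have hcτ : c (τ k₀) = 0 := hzero _ hτ
        have := hdiag k₀
        rw [hcπ, hcτ, mul_zero, mul_zero, add_zero] at this
        exact hk₀ (by nlinarith)
    · -- reverse direction
      rintro ⟨k₀, h1 | h1' | h2⟩
      · obtain ⟨hπ, hτ, ha0, ha⟩ := h1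
        refine ⟨(a k₀ k₀) • LinearMap.proj k₀, ?_⟩
        exact weight_case1 π τ a k₀ hπ hτ ha0 ha _ (fun x => rfl)
      · obtain ⟨hτ, hπ, ha0, ha⟩ := h1'
        refine ⟨(a k₀ k₀) • LinearMap.proj k₀, ?_⟩
        exact weight1' k₀ hτ hπ ha0 ha _ (fun x => rfl)
      · obtain ⟨hπ, hτ, ha0⟩ := h2
        refine ⟨(2 * a k₀ k₀) • LinearMap.proj k₀, ?_⟩
        exact weight_case2 π τ a k₀ hπ hτ ha0 _ (fun x => rfl)
  · intro k₀
    constructor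
    · rintro (⟨hπ, hτ, ha0, ha⟩ | ⟨hτ, hπ, ha0, ha⟩) σ hσ
      · exact weight_case1 π τ a k₀ hπ hτ ha0 ha σ hσ
      · exact weight1' k₀ hτ hπ ha0 ha σ hσ
    · rintro ⟨hπ, hτ, ha0⟩ σ hσ
      exact weight_case2 π τ a k₀ hπ hτ ha0 σ hσ
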